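/- A space of quantities has no zero divisors if and only if there exists a coherent system of units, i.e., a group homomorphism σ : 𝒟 → Q with dim ∘ σ = id_𝒟 whose image contains no zero element. -/

import Mathlib

/-- A space of quantities over a field `F` with group of dimensions `D`
(a finitely generated free abelian group): a set `Q` with a surjective
projection `dim : Q → D`, an abelian monoid product for which `dim` is a
monoid homomorphism, and on each fiber a one-dimensional `F`-vector space
structure (addition `add` and scalar multiplication `smul`, with `zero A`
the zero of the fiber over `A`), with the product distributing over
fiberwise addition and associating with scalar multiplication. -/
structure QuantitySpace (F : Type*) [Field F] (D : Type*) [CommGroup D]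
    [Module.Free ℤ (Additive D)] [Module.Finite ℤ (Additive D)]
    (Q : Type*) where
  dim : Q → D
  dim_surj : Function.Surjective dim
  mul : Q → Q → Q
  one : Q
  mul_comm : ∀ q r, mul q r = mul r q
  mul_assoc : ∀ q r s, mul (mul q r) s = mul q (mul r s)
  one_mul : ∀ q, mul one q = q
  dim_mul : ∀ q r, dim (mul q r) = dim q * dim r
  dim_one : dim one = 1
  add : Q → Q → Q
  smul : F → Q → Q
  zero : D → Q
  dim_zero : ∀ A, dim (zero A) = A
  dim_add : ∀ q r, dim q = dim r → dim (add q r) = dim q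
  dim_smul : ∀ (α : F) q, dim (smul α q) = dim q
  add_comm : ∀ q r, dim q = dim r → add q r = add r q
  add_assoc : ∀ q r s, dim q = dim r → dim r = dim s →
    add (add q r) s = add q (add r s)
  zero_add : ∀ q, add (zero (dim q)) q = q
  add_neg : ∀ q, add q (smul (-1) q) = zero (dim q)
  one_smul : ∀ q, smul 1 q = q
  mul_smul : ∀ (α β : F) q, smul (α * β) q = smul α (smul β q)
  smul_add : ∀ (α : F) q r, dim q = dim r →
    smul α (add q r) = add (smul α q) (smul α r)
  add_smul : ∀ (α β : F) q, smul (α + β) q = add (smul α q) (smul β q)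
  /-- each fiber contains a nonzero vector -/
  exists_nonzero : ∀ A : D, ∃ q, dim q = A ∧ q ≠ zero A
  /-- each fiber is one-dimensional: a nonzero vector spans it -/
  fiber_gen : ∀ q r, dim q = dim r → q ≠ zero (dim q) → ∃ α : F, r = smul α q
  /-- and a nonzero vector is free -/
  smul_injective : ∀ (α β : F) q, q ≠ zero (dim q) → smul α q = smul β q → α = β
  mul_add : ∀ q r s, dim r = dim s → mul q (add r s) = add (mul q r) (mul q s)
  smul_mul : ∀ (α : F) q r, mul (smul α q) r = smul α (mul q r)

namespace QuantitySpace

variable {F : Type*} [Field F] {D D' : Type*} [CommGroup D] [CommGroup D']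
  [Module.Free ℤ (Additive D)] [Module.Finite ℤ (Additive D)]
  [Module.Free ℤ (Additive D')] [Module.Finite ℤ (Additive D')]
  {Q R : Type*}

/-- `q` is a zero element, i.e. the zero of its fiber. -/
def IsZero (S : QuantitySpace F D Q) (q : Q) : Prop := q = S.zero (S.dim q)

/-- The space has no zero divisors: a product of nonzero quantities is nonzero. -/
def NoZeroDiv (S : QuantitySpace F D Q) : Prop :=
  ∀ q r, ¬ S.IsZero q → ¬ S.IsZero r → ¬ S.IsZero (S.mul q r)

/-- A section of the space: `dim ∘ σ = id`. -/
def IsSection (S : QuantitySpace F D Q) (σ : D → Q) : Prop :=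
  ∀ A, S.dim (σ A) = A

/-- A system of units: a nonzero section. -/
def IsNonzeroSection (S : QuantitySpace F D Q) (σ : D → Q) : Prop :=
  S.IsSection σ ∧ ∀ A, ¬ S.IsZero (σ A)

/-- A coherent section: a group homomorphism. -/
def IsCoherent (S : QuantitySpace F D Q) (σ : D → Q) : Prop :=
  σ 1 = S.one ∧ ∀ A B, σ (A * B) = S.mul (σ A) (σ B)

/-- `T` is a subspace: with the operations of `Q` restricted to `T` and the
restricted projection, `T` is itself a space of quantities (closed under the
operations, contains the identity, the zeros and a nonzero element of each of
its fibers, and its set of dimensions is closed under inverses, so that it is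
a subgroup). -/
def IsSubspace (S : QuantitySpace F D Q) (T : Set Q) : Prop :=
  S.one ∈ T ∧
  (∀ q ∈ T, ∀ r ∈ T, S.mul q r ∈ T) ∧
  (∀ q ∈ T, ∀ r ∈ T, S.dim q = S.dim r → S.add q r ∈ T) ∧
  (∀ (α : F), ∀ q ∈ T, S.smul α q ∈ T) ∧
  (∀ q ∈ T, S.zero (S.dim q) ∈ T) ∧
  (∀ q ∈ T, ∃ r ∈ T, S.dim r = S.dim q ∧ r ≠ S.zero (S.dim q)) ∧
  (∀ q ∈ T, ∃ r ∈ T, S.dim r = (S.dim q)⁻¹)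

/-- A homomorphism of spaces of quantities: multiplicative, fiber-preserving,
and `F`-linear on each fiber. -/
def IsHom (S : QuantitySpace F D Q) (T : QuantitySpace F D' R) (ψ : Q → R) : Prop :=
  (∀ q r, ψ (S.mul q r) = T.mul (ψ q) (ψ r)) ∧
  (∀ q₁ q₂, S.dim q₁ = S.dim q₂ → T.dim (ψ q₁) = T.dim (ψ q₂)) ∧
  (∀ (α β : F) (q₁ q₂ : Q), S.dim q₁ = S.dim q₂ →
    ψ (S.add (S.smul α q₁) (S.smul β q₂)) = T.add (T.smul α (ψ q₁)) (T.smul β (ψ q₂)))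

end QuantitySpace

variable {F : Type*} [Field F] {D D' : Type*} [CommGroup D] [CommGroup D']
  [Module.Free ℤ (Additive D)] [Module.Finite ℤ (Additive D)]
  [Module.Free ℤ (Additive D')] [Module.Finite ℤ (Additive D')]
  {Q R : Type*}
open QuantitySpace

namespace QSAux

variable {F : Type*} [Field F] {D : Type*} [CommGroup D]
  [Module.Free ℤ (Additive D)] [Module.Finite ℤ (Additive D)] {Q : Type*}

lemma zero_smul' (S : QuantitySpace F D Q) (q : Q) :
    S.smul 0 q = S.zero (S.dim q) := by
  have h : (0:F) = 1 + (-1) := by ring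
  rw [h, S.add_smul, S.one_smul]
  exact S.add_neg q

lemma isZero_smul_iff (S : QuantitySpace F D Q) (α : F) (q : Q)
    (hq : ¬ S.IsZero q) : S.IsZero (S.smul α q) ↔ α = 0 := by
  constructor
  · intro h
    have h1 : S.smul α q = S.smul 0 q := by
      rw [zero_smul' S q]
      have := h
      rwa [IsZero, S.dim_smul] at this
    exact S.smul_injective α 0 q hq h1
  · intro h
    subst h
    rw [IsZero, S.dim_smul, ← zero_smul' S q]

lemma mul_zero' (S : QuantitySpace F D Q) (q : Q) (A : D) :
    S.mul (S.zero A) q = S.zero (A * S.dim q) := by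
  have h1 : S.smul 0 (S.zero A) = S.zero A := by
    have := zero_smul' S (S.zero A); rwa [S.dim_zero] at this
  have h2 : S.mul (S.zero A) q = S.smul 0 (S.mul (S.zero A) q) := by
    conv_lhs => rw [← h1, S.smul_mul]
  rw [h2, zero_smul' S, S.dim_mul, S.dim_zero]

lemma one_ne (S : QuantitySpace F D Q) : ¬ S.IsZero S.one := by
  intro h
  rw [IsZero, S.dim_one] at h
  obtain ⟨q, hd, hne⟩ := S.exists_nonzero (1 : D)
  apply hne
  have : q = S.mul S.one q := (S.one_mul q).symm
  rw [this, h, mul_zero' S, _root_.one_mul, hd]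

lemma exists_inv (S : QuantitySpace F D Q) (hS : S.NoZeroDiv) (q : Q)
    (hq : ¬ S.IsZero q) : ∃ r, ¬ S.IsZero r ∧ S.mul q r = S.one := by
  obtain ⟨r0, hd, hne⟩ := S.exists_nonzero (S.dim q)⁻¹
  have hr0 : ¬ S.IsZero r0 := by rw [IsZero, hd]; exact hne
  have hqr : ¬ S.IsZero (S.mul q r0) := hS q r0 hq hr0
  have hdim : S.dim (S.mul q r0) = 1 := by rw [S.dim_mul, hd, mul_inv_cancel]
  obtain ⟨α, hα⟩ := S.fiber_gen S.one (S.mul q r0)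
    (by rw [S.dim_one, hdim]) (one_ne S)
  have hα0 : α ≠ 0 := by
    intro h0
    apply hqr
    rw [IsZero, hdim, hα, h0, zero_smul' S, S.dim_one]
  refine ⟨S.smul α⁻¹ r0, ?_, ?_⟩
  · rw [IsZero, S.dim_smul, ← S.dim_smul α⁻¹ r0]
    intro h
    exact inv_ne_zero hα0 ((isZero_smul_iff S α⁻¹ r0 hr0).mp h)
  · calc S.mul q (S.smul α⁻¹ r0) = S.mul (S.smul α⁻¹ r0) q := S.mul_comm ..
      _ = S.smul α⁻¹ (S.mul r0 q) := S.smul_mul ..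
      _ = S.smul α⁻¹ (S.mul q r0) := by rw [S.mul_comm r0 q]
      _ = S.smul α⁻¹ (S.smul α S.one) := by rw [hα]
      _ = S.smul (α⁻¹ * α) S.one := (S.mul_smul ..).symm
      _ = S.one := by rw [inv_mul_cancel₀ hα0, S.one_smul]

/-- The nonzero quantities. -/
def Nz (S : QuantitySpace F D Q) : Type _ := {q : Q // ¬ S.IsZero q}

/-- Nonzero quantities form a commutative group when there are no zero
divisors. -/
noncomputable def commGroupNz (S : QuantitySpace F D Q) (hS : S.NoZeroDiv) :
    CommGroup (Nz S) where
  mul a b := ⟨S.mul a.1 b.1, hS _ _ a.2 b.2⟩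
  one := ⟨S.one, one_ne S⟩
  inv a := ⟨(exists_inv S hS a.1 a.2).choose, (exists_inv S hS a.1 a.2).choose_spec.1⟩
  mul_assoc a b c := Subtype.ext (S.mul_assoc ..)
  one_mul a := Subtype.ext (S.one_mul _)
  mul_one a := Subtype.ext (by
    show S.mul a.1 S.one = a.1
    rw [S.mul_comm]; exact S.one_mul _)
  mul_comm a b := Subtype.ext (S.mul_comm ..)
  inv_mul_cancel a := Subtype.ext (by
    show S.mul _ a.1 = S.one
    rw [S.mul_comm]
    exact (exists_inv S hS a.1 a.2).choose_spec.2)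

end QSAux

open QSAux

theorem noZeroDiv_iff_coherent_units (S : QuantitySpace F D Q) :
    S.NoZeroDiv ↔ ∃ σ : D → Q, S.IsNonzeroSection σ ∧ S.IsCoherent σ := by
  constructor
  · intro hS
    letI : CommGroup (Nz S) := commGroupNz S hS
    let dimHom : Nz S →* D :=
      { toFun := fun a => S.dim a.1
        map_one' := S.dim_one
        map_mul' := fun a b => S.dim_mul a.1 b.1 }
    let dimL : Additive (Nz S) →ₗ[ℤ] Additive D :=
      (MonoidHom.toAdditive dimHom).toIntLinearMap
    let b := Module.Free.chooseBasis ℤ (Additive D)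
    have hpre : ∀ i, ∃ a : Nz S, S.dim a.1 = Additive.toMul (b i) := by
      intro i
      obtain ⟨q, hd, hne⟩ := S.exists_nonzero (Additive.toMul (b i))
      exact ⟨⟨q, by rw [IsZero, hd]; exact hne⟩, hd⟩
    choose pre hpre' using hpre
    let σL : Additive D →ₗ[ℤ] Additive (Nz S) :=
      b.constr ℤ (fun i => Additive.ofMul (pre i))
    have hcomp : dimL.comp σL = LinearMap.id := by
      apply b.ext
      intro i
      simp only [LinearMap.comp_apply, LinearMap.id_apply, σL, Module.Basis.constr_basis]
      show Additive.ofMul (dimHom (pre i)) = b i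
      show Additive.ofMul (S.dim (pre i).1) = b i
      rw [hpre' i]
      rfl
    refine ⟨fun A => (Additive.toMul (σL (Additive.ofMul A))).1, ⟨?_, ?_⟩, ?_, ?_⟩
    · intro A
      have := LinearMap.congr_fun hcomp (Additive.ofMul A)
      exact congrArg Additive.toMul this
    · intro A
      exact (Additive.toMul (σL (Additive.ofMul A))).2
    · have h0 : σL (Additive.ofMul (1 : D)) = 0 := by
        show σL 0 = 0
        exact map_zero σL
      exact congrArg (fun x => (Additive.toMul x).1) h0
    · intro A B
      have hadd : σL (Additive.ofMul (A * B)) =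
          σL (Additive.ofMul A) + σL (Additive.ofMul B) := map_add σL _ _
      exact congrArg (fun x => (Additive.toMul x).1) hadd
  · rintro ⟨σ, ⟨hsec, hnz⟩, _, hσmul⟩ q r hq hr hmz
    have hσq : ¬ S.IsZero (σ (S.dim q)) := hnz _
    have hσr : ¬ S.IsZero (σ (S.dim r)) := hnz _
    obtain ⟨α, hα⟩ := S.fiber_gen (σ (S.dim q)) q (by rw [hsec]) hσq
    obtain ⟨β, hβ⟩ := S.fiber_gen (σ (S.dim r)) r (by rw [hsec]) hσr
    have hα0 : α ≠ 0 := by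
      intro h0
      apply hq
      show q = S.zero (S.dim q)
      conv_lhs => rw [hα, h0]
      rw [zero_smul' S, hsec]
    have hβ0 : β ≠ 0 := by
      intro h0
      apply hr
      show r = S.zero (S.dim r)
      conv_lhs => rw [hβ, h0]
      rw [zero_smul' S, hsec]
    have key : S.mul q r = S.smul (α * β) (σ (S.dim q * S.dim r)) := by
      conv_lhs => rw [hα, hβ]
      rw [hσmul]
      calc S.mul (S.smul α (σ (S.dim q))) (S.smul β (σ (S.dim r)))
          = S.smul α (S.mul (σ (S.dim q)) (S.smul β (σ (S.dim r)))) := S.smul_mul ..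
        _ = S.smul α (S.mul (S.smul β (σ (S.dim r))) (σ (S.dim q))) := by
            rw [S.mul_comm (σ (S.dim q))]
        _ = S.smul α (S.smul β (S.mul (σ (S.dim r)) (σ (S.dim q)))) := by
            rw [S.smul_mul]
        _ = S.smul (α * β) (S.mul (σ (S.dim q)) (σ (S.dim r))) := by
            rw [← S.mul_smul, S.mul_comm (σ (S.dim r))]
    rw [key] at hmz
    exact mul_ne_zero hα0 hβ0 ((isZero_smul_iff S (α * β) _ (hnz _)).mp hmz)
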